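/- If m ≤ N, then the family of permutation operators (fun σ : Equiv.Perm (Fin m) => P_σ), viewed as elements of the space of ℂ-linear endomorphisms of ⨂[ℂ]^m V, is linearly independent over ℂ. -/

import Mathlib

open scoped TensorProduct

/-- The permutation operator `P_σ` on the `m`-fold tensor power of `V = Fin N → ℂ`,
sending `v₁ ⊗ ⋯ ⊗ v_m` to `v_{σ⁻¹(1)} ⊗ ⋯ ⊗ v_{σ⁻¹(m)}`. -/
noncomputable def permOp (N m : ℕ) (σ : Equiv.Perm (Fin m)) :
    (⨂[ℂ] _ : Fin m, (Fin N → ℂ)) →ₗ[ℂ] ⨂[ℂ] _ : Fin m, (Fin N → ℂ) :=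
  (PiTensorProduct.reindex ℂ (fun _ : Fin m => (Fin N → ℂ)) σ).toLinearMap

/-- For `m ≤ N` the permutation operators on `V^{⊗ m}` are linearly independent over `ℂ`. -/
theorem linearIndependent_permOp (N : ℕ) (hN : 0 < N) (m : ℕ) (hm : m ≤ N) :
    LinearIndependent ℂ (fun σ : Equiv.Perm (Fin m) => permOp N m σ) := by
  classical
  refine (Fintype.linearIndependent_iff (R := ℂ)
    (v := fun σ : Equiv.Perm (Fin m) => permOp N m σ)).mpr ?_
  intro c hc τ
  set e : Fin m → (Fin N → ℂ) := fun i => Pi.single (Fin.castLE hm i) 1 with he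
  set x : ⨂[ℂ] _ : Fin m, (Fin N → ℂ) := PiTensorProduct.tprod ℂ e with hx
  set φ : (⨂[ℂ] _ : Fin m, (Fin N → ℂ)) →ₗ[ℂ] ℂ :=
    PiTensorProduct.lift ((MultilinearMap.mkPiAlgebra ℂ (Fin m) ℂ).compLinearMap
      (fun i => LinearMap.proj (Fin.castLE hm (τ⁻¹ i)))) with hφ
  have hev : ∀ σ : Equiv.Perm (Fin m), φ (permOp N m σ x) = if σ = τ then 1 else 0 := by
    intro σ
    have hps : permOp N m σ x = PiTensorProduct.tprod ℂ (fun i => e (σ⁻¹ i)) := by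
      simp [permOp, hx, PiTensorProduct.reindex_tprod]
    rw [hps, hφ, PiTensorProduct.lift.tprod]
    simp only [MultilinearMap.compLinearMap_apply, MultilinearMap.mkPiAlgebra_apply,
      LinearMap.proj_apply, he]
    by_cases h : σ = τ
    · subst h
      simp
    · rw [if_neg h]
      have hne : σ⁻¹ ≠ τ⁻¹ := fun hh => h (inv_injective hh)
      obtain ⟨i, hi⟩ : ∃ i, σ⁻¹ i ≠ τ⁻¹ i := by
        by_contra hall
        push_neg at hall
        exact hne (Equiv.ext hall)
      refine Finset.prod_eq_zero (Finset.mem_univ i) ?_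
      have : Fin.castLE hm (τ⁻¹ i) ≠ Fin.castLE hm (σ⁻¹ i) := by
        intro hh
        exact hi (Fin.castLE_injective hm hh.symm)
      simp only [Equiv.Perm.inv_def] at this
      simp [Pi.single_eq_of_ne this]
  have hx0 : φ ((∑ σ : Equiv.Perm (Fin m), c σ • permOp N m σ) x) = 0 := by
    rw [hc]; simp
  rw [LinearMap.sum_apply] at hx0
  simp only [LinearMap.smul_apply, map_sum, map_smul, hev, smul_eq_mul,
    mul_ite, mul_one, mul_zero, Finset.sum_ite_eq', Finset.mem_univ, if_true] at hx0
  exact hx0
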